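/- Let q be a prime power with q ≥ 3, m ≥ 2, and n = (q^m − 1)/(q − 1). The even-like subcode 𝐶̃_{(n,q,m,2)} = {c ∈ GF(q)^n : Σ_{j=0}^{n−1} c_j = 0 and Σ_{j=0}^{n−1} c_j β^j = 0} has dimension n − m − 1 over GF(q), and its minimum distance d satisfies 3 ≤ d ≤ 4. -/

import Mathlib

/-- The linear map `c ↦ Σ_j c_j • β^(i·j)` from `GF(q)^n` to `GF(q^m)`. -/
noncomputable def bchCheck (F E : Type*) [Field F] [Field E] [Algebra F E]
    (n : ℕ) (β : E) (i : ℕ) : (Fin n → F) →ₗ[F] E :=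
  ∑ j : Fin n, (LinearMap.proj j : (Fin n → F) →ₗ[F] F).smulRight (β ^ (i * (j : ℕ)))

/-- The narrow-sense BCH code of length `n` and designed distance `δ`. -/
noncomputable def bchCode (F E : Type*) [Field F] [Field E] [Algebra F E]
    (n : ℕ) (β : E) (δ : ℕ) : Submodule F (Fin n → F) :=
  ⨅ i ∈ Finset.Icc 1 (δ - 1), LinearMap.ker (bchCheck F E n β i)

/-- The linear map `c ↦ Σ_j c_j`. -/
noncomputable def sumCoords (F : Type*) [Field F] (n : ℕ) : (Fin n → F) →ₗ[F] F :=
  ∑ j : Fin n, (LinearMap.proj j : (Fin n → F) →ₗ[F] F)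

private lemma geomAux (q : ℕ) (hq : 1 ≤ q) (m : ℕ) :
    (q - 1) * ∑ t ∈ Finset.range m, q ^ t = q ^ m - 1 := by
  induction m with
  | zero => simp
  | succ k ih =>
    rw [Finset.sum_range_succ, Nat.mul_add, ih]
    have h1 : 1 ≤ q ^ k := Nat.one_le_pow _ _ (by omega)
    have h2 : q ^ (k + 1) = q * q ^ k := pow_succ' q k
    have h3 : (q - 1) * q ^ k = q * q ^ k - 1 * q ^ k := Nat.sub_mul q 1 (q ^ k)
    have h4 : q ^ k ≤ q * q ^ k := Nat.le_mul_of_pos_left _ (by omega)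
    omega

/-- The even-like subcode of the narrow-sense BCH code. -/
noncomputable def bchCodeEven (F E : Type*) [Field F] [Field E] [Algebra F E]
    (n : ℕ) (β : E) (δ : ℕ) : Submodule F (Fin n → F) :=
  bchCode F E n β δ ⊓ LinearMap.ker (sumCoords F n)

theorem stmt6 (q m n : ℕ) (hq : 3 ≤ q) (hm : 2 ≤ m) (hn : n = (q ^ m - 1) / (q - 1))
    (F E : Type*) [Field F] [Fintype F] [DecidableEq F] [Field E] [Fintype E]
    [Algebra F E] (hF : Fintype.card F = q) (hE : Fintype.card E = q ^ m)
    (α : E) (hα : orderOf α = q ^ m - 1) (β : E) (hβ : β = α ^ (q - 1)) :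
    Module.finrank F ↥(bchCodeEven F E n β 2) = n - m - 1 ∧
      ∃ d : ℕ,
        IsLeast {w : ℕ | ∃ c ∈ bchCodeEven F E n β 2, c ≠ 0 ∧ hammingNorm c = w} d ∧
        3 ≤ d ∧ d ≤ 4 := by
  classical
  haveI : FiniteDimensional F E := Module.Finite.of_finite
  haveI : NoZeroSMulDivisors F E :=
    inferInstance
  -- numeric facts
  have hsum : (q - 1) * ∑ t ∈ Finset.range m, q ^ t = q ^ m - 1 := geomAux q (by omega) m
  have hqm : 1 ≤ q ^ m := Nat.one_le_pow _ _ (by omega)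
  have hqm2 : 2 ≤ q ^ m := by
    calc 2 ≤ q := by omega
    _ = q ^ 1 := (pow_one q).symm
    _ ≤ q ^ m := Nat.pow_le_pow_right (by omega) (by omega)
  have hnS : n = ∑ t ∈ Finset.range m, q ^ t := by
    rw [hn, ← hsum, Nat.mul_div_cancel_left _ (by omega : 0 < q - 1)]
  have hn4 : 4 ≤ n := by
    have h2 : ∑ t ∈ Finset.range 2, q ^ t ≤ ∑ t ∈ Finset.range m, q ^ t :=
      Finset.sum_le_sum_of_subset (Finset.range_subset_range.mpr hm)
    rw [Finset.sum_range_succ, Finset.sum_range_one, pow_zero, pow_one] at h2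
    omega
  have hqm1 : q ^ (m - 1) ≤ n := by
    rw [hnS]
    exact Finset.single_le_sum (f := fun t => q ^ t) (fun t _ => Nat.zero_le _)
      (Finset.mem_range.mpr (by omega))
  have hnq : n * (q - 1) = q ^ m - 1 := by rw [hnS, mul_comm]; exact hsum
  -- (n : F) = 1
  have hqF : ((q : ℕ) : F) = 0 := by rw [← hF]; exact FiniteField.cast_card_eq_zero F
  have hgeo' : ∀ k : ℕ, (∑ t ∈ Finset.range (k + 1), q ^ t) =
      1 + q * ∑ t ∈ Finset.range k, q ^ t := by
    intro k
    rw [Finset.sum_range_succ']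
    simp [pow_succ', Finset.mul_sum, Nat.add_comm]
  have hn1 : n = 1 + q * ∑ t ∈ Finset.range (m - 1), q ^ t := by
    rw [hnS]
    obtain ⟨k, rfl⟩ : ∃ k, m = k + 1 := ⟨m - 1, by omega⟩
    rw [Nat.add_sub_cancel]
    exact hgeo' k
  have hnF : ((n : ℕ) : F) = 1 := by
    rw [hn1]; push_cast; rw [hqF]; ring
  -- order facts
  have hα0 : α ≠ 0 := by
    intro h
    have h1 := pow_orderOf_eq_one α
    rw [hα, h, zero_pow (by omega : q ^ m - 1 ≠ 0)] at h1
    exact zero_ne_one h1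
  have hβord : orderOf β = n := by
    rw [hβ, orderOf_pow' α (by omega : q - 1 ≠ 0), hα,
      Nat.gcd_eq_right ⟨_, hsum.symm⟩, hn]
  have hβ0 : β ≠ 0 := by rw [hβ]; exact pow_ne_zero _ hα0
  have hβn : β ^ n = 1 := by rw [← hβord]; exact pow_orderOf_eq_one β
  have hβ1 : β ≠ 1 := by
    intro h; rw [h, orderOf_one] at hβord; omega
  have hβinj : ∀ i j : ℕ, i < n → j < n → β ^ i = β ^ j → i = j := by
    have key : ∀ i j : ℕ, i ≤ j → j < n → β ^ i = β ^ j → i = j := by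
      intro i j hij hj he
      have h1 : β ^ i * β ^ (j - i) = β ^ i * 1 := by
        rw [← pow_add, show i + (j - i) = j by omega, mul_one, ← he]
      have h2 : β ^ (j - i) = 1 := mul_left_cancel₀ (pow_ne_zero i hβ0) h1
      have h3 : n ∣ j - i := hβord ▸ orderOf_dvd_of_pow_eq_one h2
      have h4 : j - i = 0 := Nat.eq_zero_of_dvd_of_lt h3 (by omega)
      omega
    intro i j hi hj he
    rcases le_total i j with h | h
    · exact key i j h hj he
    · exact (key j i h hi he.symm).symm
  have hsumβ : ∑ j : Fin n, β ^ (j : ℕ) = 0 := by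
    have h1 : (∑ i ∈ Finset.range n, β ^ i) * (β - 1) = β ^ n - 1 := geom_sum_mul β n
    rw [hβn, sub_self] at h1
    have h2 := (mul_eq_zero.mp h1).resolve_right (sub_ne_zero.mpr hβ1)
    rw [Fin.sum_univ_eq_sum_range (fun i => β ^ i) n]
    exact h2
  -- apply lemmas
  have hcheck : ∀ c : Fin n → F, bchCheck F E n β 1 c = ∑ j : Fin n, c j • β ^ (j : ℕ) := by
    intro c; simp [bchCheck]
  have hsc : ∀ c : Fin n → F, sumCoords F n c = ∑ j : Fin n, c j := by
    intro c; simp [sumCoords]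
  have hcode : bchCode F E n β 2 = LinearMap.ker (bchCheck F E n β 1) := by
    ext c
    simp only [bchCode, Submodule.mem_iInf, LinearMap.mem_ker, Finset.mem_Icc]
    constructor
    · intro h; exact h 1 ⟨le_refl 1, by norm_num⟩
    · intro h i hi
      have hi1 : i = 1 := by omega
      rw [hi1]; exact h
  have hmem : ∀ c : Fin n → F, c ∈ bchCodeEven F E n β 2 ↔
      (∑ j : Fin n, c j • β ^ (j : ℕ)) = 0 ∧ (∑ j : Fin n, c j) = 0 := by
    intro c
    rw [bchCodeEven, Submodule.mem_inf, hcode, LinearMap.mem_ker, LinearMap.mem_ker,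
      hcheck, hsc]
  -- dimension of E
  have hfr : Module.finrank F E = m := by
    have hc : Fintype.card E = Fintype.card F ^ Module.finrank F E := Module.card_eq_pow_finrank
    rw [hE, hF] at hc
    exact (Nat.pow_right_injective (by omega) hc).symm
  -- the span of the powers of β is all of E
  have hVtop : Submodule.span F (Set.range fun j : Fin n => β ^ (j : ℕ)) = ⊤ := by
    set V := Submodule.span F (Set.range fun j : Fin n => β ^ (j : ℕ)) with hV
    have hmemV : ∀ j : Fin n, β ^ (j : ℕ) ∈ V := fun j => Submodule.subset_span ⟨j, rfl⟩
    have hinj : Function.Injective (fun x : Option (Fin n) =>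
        (Option.elim x (⟨0, V.zero_mem⟩ : V) (fun j => ⟨β ^ (j : ℕ), hmemV j⟩))) := by
      rintro (_ | i) (_ | j) h <;>
        simp only [Option.elim, Subtype.mk.injEq] at h
      · rfl
      · exact absurd h.symm (pow_ne_zero _ hβ0)
      · exact absurd h (pow_ne_zero _ hβ0)
      · exact congrArg some (Fin.ext (hβinj i j i.isLt j.isLt h))
    have hcard : n + 1 ≤ Fintype.card V := by
      have := Fintype.card_le_of_injective _ hinj
      simpa using this
    have hcV : Fintype.card V = Fintype.card F ^ Module.finrank F V := Module.card_eq_pow_finrank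
    rw [hF] at hcV
    have h5 : q ^ (m - 1) < q ^ Module.finrank F V := by omega
    have h6 : m - 1 < Module.finrank F V := by
      exact (Nat.pow_lt_pow_iff_right (by omega : 1 < q)).mp h5
    have h7 : Module.finrank F V ≤ m := hfr ▸ Submodule.finrank_le V
    exact Submodule.eq_top_of_finrank_eq (by rw [hfr]; omega)
  -- single-coordinate vectors
  have keyE : ∀ (i : Fin n) (t : F),
      (∑ x : Fin n, (if x = i then t else 0) • β ^ (x : ℕ)) = t • β ^ (i : ℕ) := by
    intro i t
    rw [Finset.sum_eq_single i]
    · simp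
    · intro b _ hb; simp [hb]
    · intro h; exact absurd (Finset.mem_univ i) h
  have keyF : ∀ (i : Fin n) (t : F), (∑ x : Fin n, (if x = i then t else 0)) = t := by
    intro i t
    rw [Finset.sum_eq_single i]
    · simp
    · intro b _ hb; simp [hb]
    · intro h; exact absurd (Finset.mem_univ i) h
  have hsurj1 : ∀ y : E, ∃ c, bchCheck F E n β 1 c = y := by
    intro y
    have hle : Submodule.span F (Set.range fun j : Fin n => β ^ (j : ℕ)) ≤
        LinearMap.range (bchCheck F E n β 1) := by
      rw [Submodule.span_le]
      rintro _ ⟨j, rfl⟩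
      refine ⟨fun x => if x = j then 1 else 0, ?_⟩
      rw [hcheck, keyE, one_smul]
    rw [hVtop] at hle
    exact hle Submodule.mem_top
  -- the combined check map
  set L : (Fin n → F) →ₗ[F] E × F := (bchCheck F E n β 1).prod (sumCoords F n) with hL
  have hkerL : LinearMap.ker L = bchCodeEven F E n β 2 := by
    rw [hL, LinearMap.ker_prod, bchCodeEven, hcode]
  have hLone : L (fun _ => (1 : F)) = (0, 1) := by
    rw [hL]
    simp only [LinearMap.prod_apply, Pi.prod]
    refine Prod.ext ?_ ?_
    · show bchCheck F E n β 1 (fun _ => 1) = 0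
      rw [hcheck]; simpa using hsumβ
    · show sumCoords F n (fun _ => 1) = 1
      rw [hsc, Finset.sum_const, Finset.card_univ, Fintype.card_fin, nsmul_eq_mul,
        mul_one, hnF]
  have hLtop : LinearMap.range L = ⊤ := by
    rw [LinearMap.range_eq_top]
    rintro ⟨y, t⟩
    obtain ⟨c, hc⟩ := hsurj1 y
    refine ⟨c + (t - sumCoords F n c) • (fun _ => (1 : F)), ?_⟩
    rw [map_add, map_smul, hLone]
    have hLc : L c = (y, sumCoords F n c) := by
      rw [hL]
      simp only [LinearMap.prod_apply, Function.prod]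
      rw [hc]
    rw [hLc, Prod.smul_mk, Prod.mk_add_mk]
    refine Prod.ext ?_ ?_
    · simp
    · simp only [smul_eq_mul, mul_one]; ring
  -- dimension
  have hrank : Module.finrank F (Fin n → F) = n := by simp [Module.finrank_pi]
  have hEF : Module.finrank F (E × F) = m + 1 := by
    rw [Module.finrank_prod, hfr, Module.finrank_self]
  have hrn := LinearMap.finrank_range_add_finrank_ker L
  rw [hLtop, finrank_top, hEF, hrank, hkerL] at hrn
  have hdim : Module.finrank F ↥(bchCodeEven F E n β 2) = n - m - 1 := by omega
  refine ⟨hdim, ?_⟩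
  -- lower bound: every nonzero codeword has weight ≥ 3
  have hlow : ∀ w ∈ {w : ℕ | ∃ c ∈ bchCodeEven F E n β 2, c ≠ 0 ∧ hammingNorm c = w},
      3 ≤ w := by
    rintro w ⟨c, hcmem, hc0, rfl⟩
    obtain ⟨h1, h2⟩ := (hmem c).mp hcmem
    by_contra hlt
    push_neg at hlt
    have hnorm : hammingNorm c = (Finset.filter (fun j => c j ≠ 0) Finset.univ).card := by
      simp [hammingNorm]
    set s : Finset (Fin n) := Finset.filter (fun j => c j ≠ 0) Finset.univ with hs
    have hcard : s.card ≤ 2 := by omega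
    have hsumE : ∀ g : Fin n → E, (∀ j, c j = 0 → g j = 0) →
        (∑ j ∈ s, g j) = ∑ j : Fin n, g j := fun g hg =>
      Finset.sum_subset (Finset.subset_univ s) (fun x _ hx => hg x (by simpa [hs] using hx))
    have hsumF : (∑ j ∈ s, c j) = ∑ j : Fin n, c j :=
      Finset.sum_subset (Finset.subset_univ s) (fun x _ hx => by simpa [hs] using hx)
    have hne : s.Nonempty := by
      obtain ⟨i, hi⟩ := Function.ne_iff.mp hc0
      exact ⟨i, by simp only [hs, Finset.mem_filter, Finset.mem_univ, true_and]; simpa using hi⟩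
    have h12 : s.card = 1 ∨ s.card = 2 := by
      have := Finset.card_pos.mpr hne; omega
    rcases h12 with h1c | h2c
    · obtain ⟨i, hi⟩ := Finset.card_eq_one.mp h1c
      have hci : c i ≠ 0 := by
        have hmem : i ∈ s := by rw [hi]; exact Finset.mem_singleton_self i
        simpa [hs] using hmem
      have hz : (∑ j ∈ s, c j) = 0 := by rw [hsumF]; exact h2
      rw [hi, Finset.sum_singleton] at hz
      exact hci hz
    · obtain ⟨i, j, hij, hsij⟩ := Finset.card_eq_two.mp h2c
      have hci : c i ≠ 0 := by
        have hmem : i ∈ s := by rw [hsij]; simp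
        simpa [hs] using hmem
      have e2 : c i + c j = 0 := by
        have h' := hsumF
        rw [hsij, Finset.sum_pair hij] at h'
        rw [h']; exact h2
      have e1 : c i • β ^ (i : ℕ) + c j • β ^ (j : ℕ) = 0 := by
        have h' := hsumE (fun x => c x • β ^ (x : ℕ))
          (fun x h => by show c x • β ^ (x : ℕ) = 0; rw [h, zero_smul])
        rw [hsij, Finset.sum_pair hij] at h'
        rw [h']; exact h1
      have hcj : c j = -c i := by linear_combination e2
      have e3 : c i • (β ^ (i : ℕ) - β ^ (j : ℕ)) = 0 := by
        rw [hcj] at e1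
        rw [smul_sub]
        simpa [sub_eq_add_neg] using e1
      rcases smul_eq_zero.mp e3 with h | h
      · exact hci h
      · exact hij (Fin.ext (hβinj i j i.isLt j.isLt (sub_eq_zero.mp h)))
  -- upper bound: construct a codeword of weight ≤ 4 via pigeonhole
  set Sg : Subgroup Eˣ := (Units.map (algebraMap F E).toMonoidHom).range with hSg
  have hinjphi : Function.Injective (Units.map (algebraMap F E).toMonoidHom) :=
    Units.map_injective (algebraMap F E).injective
  have hcardQ : Nat.card (Eˣ ⧸ Sg) = n := by
    have h1 : Nat.card Eˣ = q ^ m - 1 := by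
      rw [Nat.card_units, Nat.card_eq_fintype_card, hE]
    have h2 : Nat.card Sg = q - 1 := by
      have h3 := Nat.card_congr (MonoidHom.ofInjective hinjphi).toEquiv
      rw [← h3, Nat.card_units, Nat.card_eq_fintype_card, hF]
    have h3 := Subgroup.card_eq_card_quotient_mul_card_subgroup Sg
    rw [h1, h2] at h3
    refine Nat.eq_of_mul_eq_mul_right (by omega : 0 < q - 1) ?_
    rw [hnq]; exact h3.symm
  haveI : Fintype (Eˣ ⧸ Sg) := Fintype.ofFinite _
  set f : Fin n × Fin n → Eˣ ⧸ Sg := fun p =>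
    if h : β ^ (p.1 : ℕ) - β ^ (p.2 : ℕ) = 0 then (1 : Eˣ ⧸ Sg)
    else QuotientGroup.mk (Units.mk0 _ h) with hf
  have hp0 : (0 : ℕ) < n := by omega
  have hp1 : (1 : ℕ) < n := by omega
  have hp2 : (2 : ℕ) < n := by omega
  have hp3 : (3 : ℕ) < n := by omega
  set s' : Finset (Fin n × Fin n) :=
    ((Finset.univ.erase ⟨0, hp0⟩).image fun j => ((⟨0, hp0⟩ : Fin n), j)) ∪
      {((⟨1, hp1⟩ : Fin n), (⟨2, hp2⟩ : Fin n)), ((⟨1, hp1⟩ : Fin n), (⟨3, hp3⟩ : Fin n))}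
    with hs'
  have hs'lt : ∀ p ∈ s', (p.1 : ℕ) < (p.2 : ℕ) := by
    intro p hp
    rw [hs', Finset.mem_union] at hp
    rcases hp with hp | hp
    · obtain ⟨j, hj, rfl⟩ := Finset.mem_image.mp hp
      have hj0 : j ≠ ⟨0, hp0⟩ := (Finset.mem_erase.mp hj).1
      have : (j : ℕ) ≠ 0 := fun h => hj0 (Fin.ext h)
      simpa using by omega
    · rcases Finset.mem_insert.mp hp with rfl | hp
      · simp
      · rw [Finset.mem_singleton] at hp; subst hp; simp
  have hcards' : n + 1 ≤ s'.card := by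
    have hdisj : Disjoint
        ((Finset.univ.erase (⟨0, hp0⟩ : Fin n)).image fun j => ((⟨0, hp0⟩ : Fin n), j))
        ({((⟨1, hp1⟩ : Fin n), (⟨2, hp2⟩ : Fin n)),
          ((⟨1, hp1⟩ : Fin n), (⟨3, hp3⟩ : Fin n))} : Finset (Fin n × Fin n)) := by
      rw [Finset.disjoint_right]
      intro x hx hx'
      obtain ⟨j, _, rfl⟩ := Finset.mem_image.mp hx'
      rcases Finset.mem_insert.mp hx with h | h
      · have := congrArg (fun p : Fin n × Fin n => (p.1 : ℕ)) h
        simpa using this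
      · rw [Finset.mem_singleton] at h
        have := congrArg (fun p : Fin n × Fin n => (p.1 : ℕ)) h
        simpa using this
    have hinjpair : Function.Injective fun j : Fin n => ((⟨0, hp0⟩ : Fin n), j) :=
      fun a b h => congrArg Prod.snd h
    have hc2 : ({((⟨1, hp1⟩ : Fin n), (⟨2, hp2⟩ : Fin n)),
        ((⟨1, hp1⟩ : Fin n), (⟨3, hp3⟩ : Fin n))} : Finset (Fin n × Fin n)).card = 2 := by
      rw [Finset.card_insert_of_notMem, Finset.card_singleton]
      rw [Finset.mem_singleton]
      intro h
      have := congrArg (fun p : Fin n × Fin n => (p.2 : ℕ)) h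
      simp at this
    rw [hs', Finset.card_union_of_disjoint hdisj,
      Finset.card_image_of_injective _ hinjpair,
      Finset.card_erase_of_mem (Finset.mem_univ _), Finset.card_univ, Fintype.card_fin, hc2]
    omega
  have hcardlt : (Finset.univ : Finset (Eˣ ⧸ Sg)).card < s'.card := by
    rw [Finset.card_univ, ← Nat.card_eq_fintype_card, hcardQ]; omega
  obtain ⟨a, ha, b, hb, hab, hfab⟩ :=
    Finset.exists_ne_map_eq_of_card_lt_of_maps_to hcardlt
      (fun p _ => Finset.mem_univ (f p))
  have ha12 : (a.1 : ℕ) < (a.2 : ℕ) := hs'lt a ha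
  have hb12 : (b.1 : ℕ) < (b.2 : ℕ) := hs'lt b hb
  have hane : β ^ (a.1 : ℕ) - β ^ (a.2 : ℕ) ≠ 0 := by
    intro h
    have := hβinj a.1 a.2 a.1.isLt a.2.isLt (sub_eq_zero.mp h)
    omega
  have hbne : β ^ (b.1 : ℕ) - β ^ (b.2 : ℕ) ≠ 0 := by
    intro h
    have := hβinj b.1 b.2 b.1.isLt b.2.isLt (sub_eq_zero.mp h)
    omega
  rw [hf] at hfab
  simp only [dif_neg hane, dif_neg hbne] at hfab
  obtain ⟨μ, hμ⟩ := QuotientGroup.eq.mp hfab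
  set lam : F := (μ : F) with hlam
  have hlam0 : lam ≠ 0 := μ.ne_zero
  have hrel : β ^ (b.1 : ℕ) - β ^ (b.2 : ℕ) =
      (β ^ (a.1 : ℕ) - β ^ (a.2 : ℕ)) * algebraMap F E lam := by
    have h1 : (Units.mk0 _ hane) * (Units.map (algebraMap F E).toMonoidHom μ) =
        Units.mk0 _ hbne := by
      rw [hμ, mul_inv_cancel_left]
    have h2 := congrArg Units.val h1
    simpa using h2.symm
  set c : Fin n → F := fun x =>
    (if x = b.1 then (1 : F) else 0) - (if x = b.2 then (1 : F) else 0)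
      - (if x = a.1 then lam else 0) + (if x = a.2 then lam else 0) with hcdef
  have hcmem : c ∈ bchCodeEven F E n β 2 := by
    rw [hmem]
    constructor
    · have hexp : (∑ x : Fin n, c x • β ^ (x : ℕ)) =
          (∑ x : Fin n, (if x = b.1 then (1 : F) else 0) • β ^ (x : ℕ))
          - (∑ x : Fin n, (if x = b.2 then (1 : F) else 0) • β ^ (x : ℕ))
          - (∑ x : Fin n, (if x = a.1 then lam else 0) • β ^ (x : ℕ))
          + (∑ x : Fin n, (if x = a.2 then lam else 0) • β ^ (x : ℕ)) := by
        rw [← Finset.sum_sub_distrib, ← Finset.sum_sub_distrib, ← Finset.sum_add_distrib]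
        refine Finset.sum_congr rfl fun x _ => ?_
        rw [hcdef]
        simp only [sub_smul, add_smul]
      rw [hexp, keyE, keyE, keyE, keyE, one_smul, one_smul, Algebra.smul_def,
        Algebra.smul_def, hrel]
      ring
    · have hexp : (∑ x : Fin n, c x) =
          (∑ x : Fin n, (if x = b.1 then (1 : F) else 0))
          - (∑ x : Fin n, (if x = b.2 then (1 : F) else 0))
          - (∑ x : Fin n, (if x = a.1 then lam else 0))
          + (∑ x : Fin n, (if x = a.2 then lam else 0)) := by
        rw [← Finset.sum_sub_distrib, ← Finset.sum_sub_distrib, ← Finset.sum_add_distrib]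
      rw [hexp, keyF, keyF, keyF, keyF]
      ring
  have ha1a2 : a.1 ≠ a.2 := fun h => by rw [h] at ha12; omega
  have hb1b2 : b.1 ≠ b.2 := fun h => by rw [h] at hb12; omega
  have hc0 : c ≠ 0 := by
    intro h0
    have e1 : c b.1 = 0 := by rw [h0]; rfl
    have e2 : c b.2 = 0 := by rw [h0]; rfl
    rw [hcdef] at e1 e2
    simp only [eq_self_iff_true, if_true, if_neg hb1b2, if_neg (Ne.symm hb1b2)] at e1 e2
    by_cases h1 : b.1 = a.1
    · have hne0 : b.1 ≠ a.2 := fun hh => ha1a2 (h1.symm.trans hh)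
      rw [if_pos h1, if_neg hne0] at e1
      have hlam1 : lam = 1 := by linear_combination -e1
      have hne1 : b.2 ≠ a.1 := fun h => hb1b2 (h1.trans h.symm)
      rw [if_neg hne1] at e2
      by_cases h2 : b.2 = a.2
      · exact hab (Prod.ext_iff.mpr ⟨h1.symm, h2.symm⟩)
      · rw [if_neg h2] at e2
        simp at e2
    · rw [if_neg h1] at e1
      by_cases h2 : b.1 = a.2
      · rw [if_pos h2] at e1
        have hne2 : b.2 ≠ a.2 := fun h => hb1b2 (h2.trans h.symm)
        rw [if_neg hne2] at e2
        by_cases h3 : b.2 = a.1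
        · -- a.1 = b.2, a.2 = b.1 : contradicts the orderings
          have w1 : (a.1 : ℕ) = (b.2 : ℕ) := by rw [h3]
          have w2 : (a.2 : ℕ) = (b.1 : ℕ) := by rw [h2]
          omega
        · rw [if_neg h3] at e2
          simp at e2
      · rw [if_neg h2] at e1
        simp at e1
  have hwt : hammingNorm c ≤ 4 := by
    have hsub : Finset.filter (fun x => c x ≠ 0) Finset.univ ⊆
        ({b.1, b.2, a.1, a.2} : Finset (Fin n)) := by
      intro x hx
      rw [Finset.mem_filter] at hx
      by_contra hxmem
      simp only [Finset.mem_insert, Finset.mem_singleton] at hxmem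
      push_neg at hxmem
      obtain ⟨u1, u2, u3, u4⟩ := hxmem
      apply hx.2
      rw [hcdef]
      simp only [if_neg u1, if_neg u2, if_neg u3, if_neg u4]
      ring
    have h4 : ({b.1, b.2, a.1, a.2} : Finset (Fin n)).card ≤ 4 := by
      refine le_trans (Finset.card_insert_le _ _) (Nat.succ_le_succ ?_)
      refine le_trans (Finset.card_insert_le _ _) (Nat.succ_le_succ ?_)
      refine le_trans (Finset.card_insert_le _ _) (Nat.succ_le_succ ?_)
      simp
    have : hammingNorm c = (Finset.filter (fun x => c x ≠ 0) Finset.univ).card := by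
      simp [hammingNorm]
    rw [this]
    exact le_trans (Finset.card_le_card hsub) h4
  -- assemble
  have hWmem : hammingNorm c ∈
      {w : ℕ | ∃ c ∈ bchCodeEven F E n β 2, c ≠ 0 ∧ hammingNorm c = w} :=
    ⟨c, hcmem, hc0, rfl⟩
  refine ⟨sInf _, ⟨Nat.sInf_mem ⟨_, hWmem⟩, fun w hw => Nat.sInf_le hw⟩, ?_, ?_⟩
  · exact hlow _ (Nat.sInf_mem ⟨_, hWmem⟩)
  · exact le_trans (Nat.sInf_le hWmem) hwt
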